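/- Let 0 < a < b, σ1, σ2 > 0, ρ ∈ (−1, 1), let Σ = [[σ1², ρσ1σ2], [ρσ1σ2, σ2²]], let f : ℝ → ℝ^p be continuously differentiable on [a, b], and let F(t) := I_2 ⊗ f(t) ∈ ℝ^{2p×2} (Kronecker product of the 2×2 identity with the column vector f(t)). Define M := ∫_a^b Ḟ(t) Σ⁻¹ Ḟ(t)ᵀ dt + (1/a)·F(a) Σ⁻¹ F(a)ᵀ and M11 := ∫_a^b ḟ(t) ḟ(t)ᵀ dt + (1/a)·f(a) f(a)ᵀ. Then M = Σ⁻¹ ⊗ M11 (Kronecker product), and if M11 is invertible, then M is invertible with M⁻¹ = Σ ⊗ M11⁻¹; in particular the top-left p×p block of M⁻¹ equals σ1²·M11⁻¹ and the bottom-right p×p block equals σ2²·M11⁻¹. -/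

import Mathlib

open Matrix MeasureTheory intervalIntegral Kronecker

/-- Corollary after Remark 3.1 (equal regression functions `f1 = f2 = f`): the joint
information matrix factorizes as `M = Σ⁻¹ ⊗ M11`, hence `M⁻¹ = Σ ⊗ M11⁻¹`, so the
diagonal blocks of the covariance of the joint BLUE are `σ1² M11⁻¹` and `σ2² M11⁻¹`,
i.e. simultaneous estimation brings no improvement. -/
theorem equal_regression_functions_kronecker
    (p : ℕ) (a b : ℝ) (ha : 0 < a) (hab : a < b)
    (σ1 σ2 ρ : ℝ) (hσ1 : 0 < σ1) (hσ2 : 0 < σ2) (hρ : ρ ∈ Set.Ioo (-1 : ℝ) 1)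
    (Sig : Matrix (Fin 2) (Fin 2) ℝ)
    (hSig : Sig = !![σ1 ^ 2, ρ * σ1 * σ2; ρ * σ1 * σ2, σ2 ^ 2])
    (f : ℝ → Fin p → ℝ)
    (hf : ∀ i, ContDiffOn ℝ 1 (fun t => f t i) (Set.Icc a b))
    (F : ℝ → Matrix (Fin 2 × Fin p) (Fin 2) ℝ)
    (hF : ∀ t, F t = ((1 : Matrix (Fin 2) (Fin 2) ℝ) ⊗ₖ Matrix.replicateCol (Fin 1) (f t)).submatrix
        id (fun j : Fin 2 => (j, (0 : Fin 1))))
    (Fdot : ℝ → Matrix (Fin 2 × Fin p) (Fin 2) ℝ)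
    (hFdot : ∀ t i j, Fdot t i j = deriv (fun s => F s i j) t)
    (fdot : ℝ → Fin p → ℝ)
    (hfdot : ∀ t i, fdot t i = deriv (fun s => f s i) t)
    (M : Matrix (Fin 2 × Fin p) (Fin 2 × Fin p) ℝ)
    (hM : M = (Matrix.of fun i j => ∫ t in a..b, (Fdot t * Sig⁻¹ * (Fdot t)ᵀ) i j)
        + (1 / a) • (F a * Sig⁻¹ * (F a)ᵀ))
    (M11 : Matrix (Fin p) (Fin p) ℝ)
    (hM11 : M11 = (Matrix.of fun i j => ∫ t in a..b, fdot t i * fdot t j)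
        + (1 / a) • Matrix.vecMulVec (f a) (f a)) :
    M = Sig⁻¹ ⊗ₖ M11 ∧
    (IsUnit M11 →
      IsUnit M ∧ M⁻¹ = Sig ⊗ₖ M11⁻¹ ∧
      (M⁻¹).submatrix (fun i : Fin p => ((0 : Fin 2), i)) (fun j : Fin p => ((0 : Fin 2), j))
        = σ1 ^ 2 • M11⁻¹ ∧
      (M⁻¹).submatrix (fun i : Fin p => ((1 : Fin 2), i)) (fun j : Fin p => ((1 : Fin 2), j))
        = σ2 ^ 2 • M11⁻¹) := by
  -- entrywise formula for F
  have hFe : ∀ t (i : Fin 2 × Fin p) (j : Fin 2),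
      F t i j = if i.1 = j then f t i.2 else 0 := by
    intro t i j
    rw [hF]
    simp [Matrix.kroneckerMap_apply, Matrix.one_apply, Matrix.replicateCol_apply, ite_mul]
  -- entrywise formula for Fdot
  have hFde : ∀ t (i : Fin 2 × Fin p) (j : Fin 2),
      Fdot t i j = if i.1 = j then fdot t i.2 else 0 := by
    intro t i j
    rw [hFdot, hfdot]
    by_cases h : i.1 = j
    · simp only [h, if_true]
      congr 1
      funext s
      rw [hFe, if_pos h]
    · simp only [h, if_false]
      have : (fun s => F s i j) = fun _ => (0 : ℝ) := by
        funext s; rw [hFe, if_neg h]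
      rw [this, deriv_const]
  -- the sandwich product entrywise
  have hsand : ∀ (g : Fin p → ℝ) (G : Matrix (Fin 2 × Fin p) (Fin 2) ℝ)
      (hG : ∀ i j, G i j = if i.1 = j then g i.2 else 0) (i j : Fin 2 × Fin p),
      (G * Sig⁻¹ * Gᵀ) i j = Sig⁻¹ i.1 j.1 * (g i.2 * g j.2) := by
    intro g G hG i j
    simp only [Matrix.mul_apply, Matrix.transpose_apply, hG, Fin.sum_univ_two]
    rcases i with ⟨i1, i2⟩; rcases j with ⟨j1, j2⟩
    fin_cases i1 <;> fin_cases j1 <;> simp <;> ring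
  have key : M = Sig⁻¹ ⊗ₖ M11 := by
    ext i j
    rw [hM, hM11]
    simp only [Matrix.add_apply, Matrix.of_apply, Matrix.smul_apply,
      Matrix.kroneckerMap_apply, Matrix.vecMulVec_apply, smul_eq_mul]
    have h1 : (∫ t in a..b, (Fdot t * Sig⁻¹ * (Fdot t)ᵀ) i j)
        = Sig⁻¹ i.1 j.1 * ∫ t in a..b, fdot t i.2 * fdot t j.2 := by
      rw [← intervalIntegral.integral_const_mul]
      congr 1; funext t
      exact hsand (fdot t) (Fdot t) (hFde t) i j
    rw [h1, hsand (f a) (F a) (hFe a) i j]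
    ring
  refine ⟨key, fun hU => ?_⟩
  have hdSig : Sig.det ≠ 0 := by
    rw [hSig, Matrix.det_fin_two_of]
    have h1 : (1 : ℝ) - ρ ^ 2 > 0 := by nlinarith [hρ.1, hρ.2]
    nlinarith [sq_nonneg σ1, sq_nonneg σ2, mul_pos (mul_pos hσ1 hσ1) (mul_pos hσ2 hσ2)]
  have hd : IsUnit Sig.det := isUnit_iff_ne_zero.2 hdSig
  have hUM : IsUnit M := by
    rw [key, Matrix.isUnit_iff_isUnit_det, Matrix.det_kronecker]
    simp only [Fintype.card_fin]
    exact ((Sig.isUnit_nonsing_inv_det hd).pow p).mul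
      (((Matrix.isUnit_iff_isUnit_det M11).1 hU).pow 2)
  have hinv : M⁻¹ = Sig ⊗ₖ M11⁻¹ := by
    rw [key, Matrix.inv_kronecker, Matrix.nonsing_inv_nonsing_inv Sig hd]
  refine ⟨hUM, hinv, ?_, ?_⟩ <;>
  · ext i j
    simp [hinv, Matrix.kroneckerMap_apply, hSig]
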